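/- Let G be a graph, v a fresh vertex inserted with neighborhood N(v), and G' the resulting graph. Fix a new edge e* = (v,w). If τ_{G'}(e*) ≥ k+1, then there exists a subgraph H of the induced subgraph G[N(v)] containing w such that every edge e of H has τ_G(e) ≥ k and every vertex of H has degree at least k−1 in H. (Upper-bound direction of Lemma 1: τ_new(e) ≤ max{k : w ∈ G_v^{k−1,k−2}}.) -/

import Mathlib

open SimpleGraph

/-- Support of an edge (u,v) in a subgraph K: number of common neighbors of u and v in K. -/
noncomputable def esupp {V : Type*} {G : SimpleGraph V} (K : G.Subgraph) (u v : V) : ℕ :=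
  {w | K.Adj u w ∧ K.Adj v w}.ncard

/-- K is a k-truss: every edge of K is contained in at least k-2 triangles within K. -/
def IsKTruss {V : Type*} {G : SimpleGraph V} (K : G.Subgraph) (k : ℕ) : Prop :=
  ∀ u v, K.Adj u v → k - 2 ≤ esupp K u v

/-- Trussness of edge (u,v) in G: the largest k such that some k-truss of G contains (u,v). -/
noncomputable def tr {V : Type*} (G : SimpleGraph V) (u v : V) : ℕ :=
  sSup {k | ∃ K : G.Subgraph, K.Adj u v ∧ IsKTruss K k}

/-- Support of an edge (u,v) in a graph G. -/
noncomputable def gsupp {V : Type*} (G : SimpleGraph V) (u v : V) : ℕ :=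
  {w | G.Adj u w ∧ G.Adj v w}.ncard

lemma truss_set_bddAbove {V : Type*} [Fintype V] (G : SimpleGraph V) (u v : V) :
    BddAbove {k | ∃ K : G.Subgraph, K.Adj u v ∧ IsKTruss K k} := by
  refine ⟨Fintype.card V + 2, ?_⟩
  rintro k ⟨K, hK, hT⟩
  have h1 := hT u v hK
  have h2 : esupp K u v ≤ Fintype.card V := by
    have := Set.ncard_le_ncard (Set.subset_univ {w | K.Adj u w ∧ K.Adj v w}) Set.finite_univ
    simpa [esupp, Set.ncard_univ] using this
  omega

/-- upper bound of Lemma 1: if a new edge (v,w) has trussness ≥ k+1 in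
the graph obtained by inserting the fresh vertex v with edges to N, then there is a
subgraph H of G[N(v)] containing w whose edges all have trussness ≥ k in G and whose
vertices all have degree ≥ k-1 in H. -/
theorem stmt9 {V : Type*} [Fintype V] (G G' : SimpleGraph V) (v : V) (N : Set V)
    (hvN : v ∉ N) (hIso : ∀ w, ¬ G.Adj v w)
    (hG' : ∀ x y, G'.Adj x y ↔ G.Adj x y ∨ (x = v ∧ y ∈ N) ∨ (y = v ∧ x ∈ N))
    (w : V) (hw : w ∈ N) (k : ℕ) (h : k + 1 ≤ tr G' v w) :
    ∃ H : G.Subgraph, H.verts ⊆ N ∧ w ∈ H.verts ∧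
      (∀ x y, H.Adj x y → k ≤ tr G x y) ∧
      ∀ u ∈ H.verts, k - 1 ≤ (H.neighborSet u).ncard := by
  set S := {m | ∃ K : G'.Subgraph, K.Adj v w ∧ IsKTruss K m} with hS
  have hbdd := truss_set_bddAbove G' v w
  have hne : S.Nonempty := by
    by_contra hemp
    rw [Set.not_nonempty_iff_eq_empty] at hemp
    have : tr G' v w = 0 := by
      simp only [tr, ← hS, hemp, csSup_empty]; rfl
    omega
  obtain ⟨K, hKvw, hKT⟩ : sSup S ∈ S := Nat.sSup_mem hne hbdd
  have hktr : ∀ a b, K.Adj a b → k - 1 ≤ esupp K a b := by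
    intro a b hab
    have h1 := hKT a b hab
    have h2 : k + 1 ≤ sSup S := h
    omega
  -- no vertex adjacent to v in K equals v; neighbors of v lie in N
  have hne' : ∀ x, K.Adj v x → x ≠ v := fun x hx hxv => by
    exact G'.irrefl (hxv ▸ K.adj_sub hx)
  have hNmem : ∀ x, K.Adj v x → x ∈ N := by
    intro x hx
    rcases (hG' v x).mp (K.adj_sub hx) with h1 | ⟨_, h2⟩ | ⟨h3, _⟩
    · exact absurd h1 (hIso x)
    · exact h2
    · exact absurd h3 (hne' x hx)
  have hadj_nv : ∀ a b, K.Adj a b → a ≠ v → b ≠ v → G.Adj a b := by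
    intro a b hab ha hb
    rcases (hG' a b).mp (K.adj_sub hab) with h1 | ⟨h2, _⟩ | ⟨h3, _⟩
    · exact h1
    · exact absurd h2 ha
    · exact absurd h3 hb
  -- the k-truss witness in G: K with v deleted
  let L : G.Subgraph :=
    { verts := K.verts \ {v}
      Adj := fun a b => K.Adj a b ∧ a ≠ v ∧ b ≠ v
      adj_sub := fun ⟨hab, ha, hb⟩ => hadj_nv _ _ hab ha hb
      edge_vert := fun ⟨hab, ha, _⟩ => ⟨K.edge_vert hab, ha⟩
      symm := ⟨fun a b ⟨hab, ha, hb⟩ => ⟨hab.symm, hb, ha⟩⟩ }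
  have hLtruss : IsKTruss L k := by
    intro a b hab
    obtain ⟨hab, ha, hb⟩ := hab
    have h1 := hktr a b hab
    have hsub : {c | K.Adj a c ∧ K.Adj b c} \ {v} ⊆ {c | L.Adj a c ∧ L.Adj b c} := by
      rintro c ⟨⟨h1, h2⟩, hc⟩
      exact ⟨⟨h1, ha, hc⟩, ⟨h2, hb, hc⟩⟩
    have h2 : ({c | K.Adj a c ∧ K.Adj b c} \ {v}).ncard ≤ esupp L a b :=
      Set.ncard_le_ncard hsub (Set.toFinite _)
    have h3 : {c | K.Adj a c ∧ K.Adj b c}.ncard ≤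
        ({c | K.Adj a c ∧ K.Adj b c} \ {v}).ncard + 1 := by
      have hsub2 : {c | K.Adj a c ∧ K.Adj b c} ⊆
          insert v ({c | K.Adj a c ∧ K.Adj b c} \ {v}) := by
        intro c hc
        by_cases hcv : c = v
        · exact hcv ▸ Set.mem_insert _ _
        · exact Set.mem_insert_of_mem _ ⟨hc, hcv⟩
      calc {c | K.Adj a c ∧ K.Adj b c}.ncard
          ≤ (insert v ({c | K.Adj a c ∧ K.Adj b c} \ {v})).ncard :=
            Set.ncard_le_ncard hsub2 (Set.toFinite _)
        _ ≤ ({c | K.Adj a c ∧ K.Adj b c} \ {v}).ncard + 1 :=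
            Set.ncard_insert_le _ _
    simp only [esupp] at h1
    omega
  -- the subgraph H of G[N(v)]
  refine ⟨{ verts := {x | K.Adj v x}
            Adj := fun x y => K.Adj x y ∧ K.Adj v x ∧ K.Adj v y
            adj_sub := fun ⟨hxy, hx, hy⟩ =>
              hadj_nv _ _ hxy (hne' _ hx) (hne' _ hy)
            edge_vert := fun ⟨_, hx, _⟩ => hx
            symm := ⟨fun a b ⟨hab, ha, hb⟩ => ⟨hab.symm, hb, ha⟩⟩ }, ?_, hKvw, ?_, ?_⟩
  · intro x hx
    exact hNmem x hx
  · rintro x y ⟨hxy, hx, hy⟩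
    have hLxy : L.Adj x y := ⟨hxy, hne' _ hx, hne' _ hy⟩
    exact le_csSup (truss_set_bddAbove G x y) ⟨L, hLxy, hLtruss⟩
  · intro u hu
    have h1 := hktr v u hu
    have heq : {c | K.Adj v c ∧ K.Adj u c} =
        {y | (K.Adj u y ∧ K.Adj v u ∧ K.Adj v y)} := by
      ext c
      simp only [Set.mem_setOf_eq]
      exact ⟨fun ⟨h1, h2⟩ => ⟨h2, hu, h1⟩, fun ⟨h1, _, h2⟩ => ⟨h2, h1⟩⟩
    have h2 : esupp K v u = ({y | (K.Adj u y ∧ K.Adj v u ∧ K.Adj v y)} : Set V).ncard := by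
      rw [esupp, heq]
    -- esupp K v u vs hktr gives k-1 ≤ esupp K v u
    simp only [SimpleGraph.Subgraph.neighborSet]
    rw [← h2]
    exact h1
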